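/- Every Luzin family is an L-family: if 𝒜 is a Luzin family, then every set ℙ ⊆ ℙ_𝒜 of pairwise essentially distinct conditions can be written as a countable union ℙ = ⋃_{n∈ℕ} ℙ_n where each ℙ_n consists of pairwise incompatible conditions. -/

import Mathlib

open Set Filter Cardinal

noncomputable section

/-- The Banach space `ℓ∞` of bounded real sequences with the sup norm. -/
abbrev Linfty : Type := lp (fun _ : ℕ => ℝ) ⊤

/-- An a.d.-family: an uncountable family of infinite subsets of `ℕ` which is
pairwise almost disjoint. -/
def ADFamily (𝒜 : Set (Set ℕ)) : Prop :=
  ¬𝒜.Countable ∧ (∀ A ∈ 𝒜, A.Infinite) ∧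
    ∀ A ∈ 𝒜, ∀ B ∈ 𝒜, A ≠ B → (A ∩ B).Finite

/-- A maximal a.d.-family. -/
def MaximalADFamily (𝒜 : Set (Set ℕ)) : Prop :=
  ADFamily 𝒜 ∧ ∀ X : Set ℕ, X.Infinite → ∃ A ∈ 𝒜, (X ∩ A).Infinite

/-- `A =* B` : the symmetric difference is finite. -/
def eqStar (A B : Set ℕ) : Prop := (symmDiff A B).Finite

/-- Finite subfamilies `a`, `b` of `𝒜` represent the pair `p`. -/
def Represents (𝒜 : Set (Set ℕ)) (p : Set ℕ × Set ℕ) (a b : Finset (Set ℕ)) : Prop :=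
  ↑a ⊆ 𝒜 ∧ ↑b ⊆ 𝒜 ∧ eqStar p.1 (⋃ A ∈ a, A) ∧ eqStar p.2 (⋃ B ∈ b, B)

/-- `p` is a condition of the splitting partial order `ℙ_𝒜`. -/
def SplitCond (𝒜 : Set (Set ℕ)) (p : Set ℕ × Set ℕ) : Prop :=
  p.1 ∩ p.2 = ∅ ∧ ∃ a b : Finset (Set ℕ), Represents 𝒜 p a b

/-- `Extends p q` means `p ≤ q` in `ℙ_𝒜`. -/
def Extends (p q : Set ℕ × Set ℕ) : Prop := q.1 ⊆ p.1 ∧ q.2 ⊆ p.2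

/-- Compatibility in `ℙ_𝒜`. -/
def Compat (𝒜 : Set (Set ℕ)) (p q : Set ℕ × Set ℕ) : Prop :=
  ∃ r, SplitCond 𝒜 r ∧ Extends r p ∧ Extends r q

/-- An antichain of `ℙ_𝒜`: a set of pairwise incompatible conditions. -/
def SplitAntichain (𝒜 : Set (Set ℕ)) (P : Set (Set ℕ × Set ℕ)) : Prop :=
  (∀ p ∈ P, SplitCond 𝒜 p) ∧ ∀ p ∈ P, ∀ q ∈ P, p ≠ q → ¬Compat 𝒜 p q

/-- `ℙ_𝒜` satisfies the countable chain condition. -/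
def SplitCCC (𝒜 : Set (Set ℕ)) : Prop :=
  ∀ P : Set (Set ℕ × Set ℕ), SplitAntichain 𝒜 P → P.Countable

/-- A centered subset of `ℙ_𝒜`: every finite subset has a common lower bound in `ℙ_𝒜`. -/
def SplitCentered (𝒜 : Set (Set ℕ)) (P : Set (Set ℕ × Set ℕ)) : Prop :=
  ∀ F : Finset (Set ℕ × Set ℕ), ↑F ⊆ P →
    ∃ r, SplitCond 𝒜 r ∧ ∀ p ∈ F, Extends r p

/-- `ℙ_𝒜` is σ-centered. -/
def SplitSigmaCentered (𝒜 : Set (Set ℕ)) : Prop :=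
  ∃ P : ℕ → Set (Set ℕ × Set ℕ),
    (⋃ n, P n) = {p | SplitCond 𝒜 p} ∧ ∀ n, SplitCentered 𝒜 (P n)

/-- `ℙ_𝒜` has precaliber `κ`. -/
def SplitPrecaliber (𝒜 : Set (Set ℕ)) (κ : Cardinal) : Prop :=
  ∀ P : Set (Set ℕ × Set ℕ), (∀ p ∈ P, SplitCond 𝒜 p) → #P = κ →
    ∃ Q ⊆ P, #Q = κ ∧ SplitCentered 𝒜 Q

/-- Two conditions are essentially distinct if their (uniquely determined)
representing finite subfamilies differ on both coordinates. -/
def EssDistinct (𝒜 : Set (Set ℕ)) (p q : Set ℕ × Set ℕ) : Prop :=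
  ∀ ap bp aq bq : Finset (Set ℕ), Represents 𝒜 p ap bp → Represents 𝒜 q aq bq →
    ap ≠ aq ∧ bp ≠ bq

/-- An antiramsey a.d.-family. -/
def Antiramsey (𝒜 : Set (Set ℕ)) : Prop :=
  ADFamily 𝒜 ∧
  ∀ P : Set (Set ℕ × Set ℕ), (∀ p ∈ P, SplitCond 𝒜 p) → ¬P.Countable →
    (∀ p ∈ P, ∀ q ∈ P, p ≠ q → EssDistinct 𝒜 p q) →
    (∃ p ∈ P, ∃ q ∈ P, p ≠ q ∧ Compat 𝒜 p q) ∧ (∃ p ∈ P, ∃ q ∈ P, ¬Compat 𝒜 p q)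

/-- The first uncountable ordinal. -/
def omega1 : Ordinal.{0} := (Cardinal.aleph 1).ord

/-- A Luzin family. -/
def IsLuzinFamily (𝒜 : Set (Set ℕ)) : Prop :=
  ADFamily 𝒜 ∧ ∃ A : Ordinal.{0} → Set ℕ,
    (∀ ξ < omega1, A ξ ∈ 𝒜) ∧
    (∀ B ∈ 𝒜, ∃ ξ < omega1, A ξ = B) ∧
    (∀ ξ < omega1, ∀ η < omega1, ξ ≠ η → A ξ ≠ A η) ∧
    ∀ η < omega1, ∀ m : ℕ, {ξ : Ordinal | ξ < η ∧ sSup (A ξ ∩ A η) = m}.Finite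

/-- `(B i : i < n)` forms an `n`-Luzin gap. -/
def IsNLuzinGap (n : ℕ) (B : Fin n → Ordinal.{0} → Set ℕ) : Prop :=
  (∀ i : Fin n, ∀ α < omega1, ∀ β < omega1, α ≠ β → B i α ≠ B i β) ∧
  (∀ i j : Fin n, i ≠ j → ∀ α < omega1, ∀ β < omega1, B i α ≠ B j β) ∧
  ∃ m : ℕ,
    (∀ i j : Fin n, i < j → ∀ α < omega1, B i α ∩ B j α ⊆ Set.Iio m) ∧
    (∀ α < omega1, ∀ β < omega1, α ≠ β →
      ¬(⋃ (i : Fin n) (j : Fin n) (_ : i ≠ j), B i α ∩ B j β) ⊆ Set.Iio m)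

/-- `𝒜` contains an `n`-Luzin gap. -/
def ContainsNLuzinGap (𝒜 : Set (Set ℕ)) (n : ℕ) : Prop :=
  ∃ B : Fin n → Ordinal.{0} → Set ℕ,
    (∀ i : Fin n, ∀ α < omega1, B i α ∈ 𝒜) ∧ IsNLuzinGap n B

-- The characteristic function of `A ⊆ ℕ` as an element of `ℓ∞`.
open Classical in
def indicatorLinfty (A : Set ℕ) : Linfty :=
  ⟨fun n => if n ∈ A then (1 : ℝ) else 0, by
    apply memℓp_infty
    refine ⟨1, ?_⟩
    rintro x ⟨n, rfl⟩
    dsimp only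
    split <;> simp⟩

/-- The subset `c₀` of `ℓ∞`. -/
def c0Set : Set Linfty := {f | Tendsto (fun n => f n) atTop (nhds 0)}

/-- The Johnson–Lindenstrauss space `X_𝒜`: the closed linear span of
`c₀ ∪ {1_A : A ∈ 𝒜}` in `ℓ∞`, as a (closed) submodule. -/
def XA (𝒜 : Set (Set ℕ)) : Submodule ℝ Linfty :=
  (Submodule.span ℝ (c0Set ∪ indicatorLinfty '' 𝒜)).topologicalClosure

/-- The norm `‖·‖_{∞,2}` on `ℓ∞`. -/
def norm12 (f : Linfty) : ℝ :=
  ‖f‖ + Real.sqrt (∑' n : ℕ, (f n) ^ 2 / 2 ^ (n + 1))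

/-- The unit sphere of `(X_𝒜, ‖·‖∞)`. -/
def sphereInf (𝒜 : Set (Set ℕ)) : Set Linfty :=
  {f : Linfty | f ∈ XA 𝒜 ∧ ‖f‖ = 1}

/-- The unit sphere of `(X_𝒜, ‖·‖_{∞,2})`. -/
def sphere12 (𝒜 : Set (Set ℕ)) : Set Linfty :=
  {f : Linfty | f ∈ XA 𝒜 ∧ norm12 f = 1}

/-- The Open Coloring Axiom. -/
def OCA : Prop :=
  ∀ (X : Type) [MetricSpace X], TopologicalSpace.SeparableSpace X →
    ∀ K : Set (X × X), IsOpen K → (∀ x y : X, (x, y) ∈ K → (y, x) ∈ K) →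
      (∃ Y : Set X, ¬Y.Countable ∧ ∀ x ∈ Y, ∀ y ∈ Y, x ≠ y → (x, y) ∈ K) ∨
      (∃ C : ℕ → Set X, (⋃ n, C n) = Set.univ ∧
        ∀ n, ∀ x ∈ C n, ∀ y ∈ C n, x ≠ y → (x, y) ∉ K)

/-- An `ℝ`-embeddable a.d.-family. -/
def REmbeddable (𝒜 : Set (Set ℕ)) : Prop :=
  ∃ (f : ℕ → ℚ) (r : Set ℕ → ℝ), Function.Injective f ∧
    (∀ A ∈ 𝒜, Irrational (r A) ∧
      ∀ ε : ℝ, 0 < ε → {n ∈ A | ε ≤ |(f n : ℝ) - r A|}.Finite) ∧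
    (∀ A ∈ 𝒜, ∀ B ∈ 𝒜, A ≠ B → r A ≠ r B)

/-- The Continuum Hypothesis. -/
def CH : Prop := (Cardinal.continuum : Cardinal.{0}) = Cardinal.aleph 1

end

section Statement8Aux

open Set Classical

private theorem s8_exists_nat_coloring {X : Type} (r : X → X → Prop)
    (hsym : ∀ x y, r x y → r y x) (ρ : X → Ordinal.{0})
    (hfin : ∀ x, {y | y ≠ x ∧ r x y ∧ ρ y ≤ ρ x}.Finite) :
    ∃ c : X → ℕ, ∀ x y, x ≠ y → r x y → c x ≠ c y := by
  classical
  set Rel : X → X → Prop :=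
    InvImage (Prod.Lex (· < ·) WellOrderingRel) (fun x => (ρ x, x)) with hRel
  have hwf : WellFounded Rel :=
    InvImage.wf _ (WellFounded.prod_lex Ordinal.lt_wf IsWellFounded.wf)
  have hrel_le : ∀ {x y : X}, Rel y x → y ≠ x ∧ ρ y ≤ ρ x := by
    intro x y h
    rcases Prod.lex_def.1 h with h1 | ⟨h1, h2⟩
    · refine ⟨?_, le_of_lt h1⟩; rintro rfl; exact lt_irrefl _ h1
    · refine ⟨?_, le_of_eq h1⟩; rintro rfl
      exact (irrefl_of WellOrderingRel _) h2
  set F : ∀ x : X, (∀ y : X, Rel y x → ℕ) → ℕ :=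
    fun x rec => sInf {n | ∀ y, ∀ h : Rel y x, r x y → rec y h ≠ n} with hF
  set c : X → ℕ := hwf.fix F with hc
  have hceq : ∀ x, c x = F x (fun y _ => c y) := fun x => hwf.fix_eq F x
  have hmem : ∀ x, ∀ y, Rel y x → r x y → c y ≠ c x := by
    intro x
    have hne : {n | ∀ y, ∀ h : Rel y x, r x y → c y ≠ n}.Nonempty := by
      have hfin2 : ((fun y => c y) '' {y | y ≠ x ∧ r x y ∧ ρ y ≤ ρ x}).Finite :=
        (hfin x).image _
      obtain ⟨n, hn⟩ := hfin2.infinite_compl.nonempty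
      exact ⟨n, fun y h hr hcn => hn ⟨y, ⟨(hrel_le h).1, hr, (hrel_le h).2⟩, hcn⟩⟩
    have : c x ∈ {n | ∀ y, ∀ h : Rel y x, r x y → c y ≠ n} := by
      rw [hceq x]; exact Nat.sInf_mem hne
    exact this
  refine ⟨c, fun x y hxy hr => ?_⟩
  have htri : Rel y x ∨ Rel x y := by
    rcases lt_trichotomy (ρ y) (ρ x) with h | h | h
    · exact Or.inl (Prod.lex_def.2 (Or.inl h))
    · rcases trichotomous_of WellOrderingRel y x with h2 | h2 | h2
      · exact Or.inl (Prod.lex_def.2 (Or.inr ⟨h, h2⟩))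
      · exact absurd h2 hxy.symm
      · exact Or.inr (Prod.lex_def.2 (Or.inr ⟨h.symm, h2⟩))
    · exact Or.inr (Prod.lex_def.2 (Or.inl h))
  rcases htri with h | h
  · exact (hmem x y h hr).symm
  · exact hmem y x h (hsym x y hr)

private theorem s8_finite_subsets_finset {α β : Type*} {P : Set α} (t : α → Finset β)
    (hinj : ∀ p ∈ P, ∀ q ∈ P, p ≠ q → t p ≠ t q) {W : Set β} (hW : W.Finite) :
    {p | p ∈ P ∧ ↑(t p) ⊆ W}.Finite := by
  have h1 : {v : Finset β | ↑v ⊆ W}.Finite :=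
    hW.finite_subsets.preimage (Finset.coe_injective.injOn)
  apply Set.Finite.of_finite_image (f := t)
  · exact h1.subset (by rintro _ ⟨p, ⟨hp, hsub⟩, rfl⟩; exact hsub)
  · intro p hp q hq h; by_contra hne; exact hinj p hp.1 q hq.1 hne h

/-- choice of an index below `ω` for a set in the enumerated family -/
private noncomputable def s8idx (ω : Ordinal.{0}) (A : Ordinal.{0} → Set ℕ)
    (B : Set ℕ) : Ordinal.{0} :=
  if h : ∃ ξ, ξ < ω ∧ A ξ = B then h.choose else 0

private theorem s8idx_spec {ω : Ordinal.{0}} {A : Ordinal.{0} → Set ℕ} {B : Set ℕ}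
    (h : ∃ ξ, ξ < ω ∧ A ξ = B) : s8idx ω A B < ω ∧ A (s8idx ω A B) = B := by
  simp only [s8idx, dif_pos h]
  exact h.choose_spec

/-- choice of a representation of a splitting condition -/
private noncomputable def s8rep (𝒜 : Set (Set ℕ)) (p : Set ℕ × Set ℕ) :
    Finset (Set ℕ) × Finset (Set ℕ) :=
  if h : ∃ ab : Finset (Set ℕ) × Finset (Set ℕ), Represents 𝒜 p ab.1 ab.2 then
    h.choose else (∅, ∅)

private theorem s8rep_spec {𝒜 : Set (Set ℕ)} {p : Set ℕ × Set ℕ} (h : SplitCond 𝒜 p) :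
    Represents 𝒜 p (s8rep 𝒜 p).1 (s8rep 𝒜 p).2 := by
  obtain ⟨-, a, b, hr⟩ := h
  have hex : ∃ ab : Finset (Set ℕ) × Finset (Set ℕ), Represents 𝒜 p ab.1 ab.2 := ⟨(a, b), hr⟩
  simp only [s8rep, dif_pos hex]
  exact hex.choose_spec

/-- the bound property for a condition -/
private def s8good (A : Ordinal.{0} → Set ℕ) (𝒜 : Set (Set ℕ)) (u : Finset Ordinal.{0})
    (p : Set ℕ × Set ℕ) (n : ℕ) : Prop :=
  (∀ ξ ∈ u, ∀ ζ ∈ u, ξ ≠ ζ → A ξ ∩ A ζ ⊆ Set.Iio n) ∧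
  symmDiff p.1 (⋃ B ∈ (s8rep 𝒜 p).1, B) ⊆ Set.Iio n ∧
  symmDiff p.2 (⋃ B ∈ (s8rep 𝒜 p).2, B) ⊆ Set.Iio n

private noncomputable def s8n (A : Ordinal.{0} → Set ℕ) (𝒜 : Set (Set ℕ))
    (u : Finset Ordinal.{0}) (p : Set ℕ × Set ℕ) : ℕ :=
  if h : ∃ n, s8good A 𝒜 u p n then h.choose else 0

private theorem s8n_spec {A : Ordinal.{0} → Set ℕ} {𝒜 : Set (Set ℕ)}
    {u : Finset Ordinal.{0}} {p : Set ℕ × Set ℕ} (h : ∃ n, s8good A 𝒜 u p n) :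
    s8good A 𝒜 u p (s8n A 𝒜 u p) := by
  simp only [s8n, dif_pos h]
  exact h.choose_spec

end Statement8Aux


/-- every Luzin family is an `L`-family: any set of pairwise essentially
distinct conditions of `ℙ_𝒜` is a countable union of sets of pairwise incompatible
conditions. -/
theorem statement8 (𝒜 : Set (Set ℕ)) (h𝒜 : IsLuzinFamily 𝒜)
    (P : Set (Set ℕ × Set ℕ)) (hP : ∀ p ∈ P, SplitCond 𝒜 p)
    (hed : ∀ p ∈ P, ∀ q ∈ P, p ≠ q → EssDistinct 𝒜 p q) :
    ∃ Pn : ℕ → Set (Set ℕ × Set ℕ), P = ⋃ n, Pn n ∧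
      ∀ n, ∀ p ∈ Pn n, ∀ q ∈ Pn n, p ≠ q → ¬Compat 𝒜 p q := by
  classical
  obtain ⟨hAD, A, hmemA, hsurj, hinjA, hluzin⟩ := h𝒜
  set ι : Set ℕ → Ordinal.{0} := s8idx omega1 A with hiota
  have hι : ∀ B ∈ 𝒜, ι B < omega1 ∧ A (ι B) = B := fun B hB => s8idx_spec (hsurj B hB)
  set sF : (Set ℕ × Set ℕ) → Finset Ordinal.{0} := fun p => ((s8rep 𝒜 p).1).image ι with hsF
  set tF : (Set ℕ × Set ℕ) → Finset Ordinal.{0} := fun p => ((s8rep 𝒜 p).2).image ι with htF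
  set uF : (Set ℕ × Set ℕ) → Finset Ordinal.{0} := fun p => sF p ∪ tF p with huF
  set ηF : (Set ℕ × Set ℕ) → Ordinal.{0} := fun p => (uF p).sup id with hetaF
  set nF : (Set ℕ × Set ℕ) → ℕ := fun p => s8n A 𝒜 (uF p) p with hnF
  have hrep : ∀ p ∈ P, Represents 𝒜 p (s8rep 𝒜 p).1 (s8rep 𝒜 p).2 :=
    fun p hp => s8rep_spec (hP p hp)
  -- recovery of members of the representing families from indices
  have hrec1 : ∀ p ∈ P, ∀ ξ ∈ sF p,
      A ξ ∈ (s8rep 𝒜 p).1 ∧ A ξ ∈ 𝒜 ∧ ι (A ξ) = ξ ∧ ξ < omega1 := by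
    intro p hp ξ hξ
    obtain ⟨B, hB, rfl⟩ := Finset.mem_image.1 hξ
    have hB𝒜 : B ∈ 𝒜 := (hrep p hp).1 hB
    have h2 := hι B hB𝒜
    rw [h2.2]
    exact ⟨hB, hB𝒜, rfl, h2.1⟩
  have hrec2 : ∀ p ∈ P, ∀ ξ ∈ tF p,
      A ξ ∈ (s8rep 𝒜 p).2 ∧ A ξ ∈ 𝒜 ∧ ι (A ξ) = ξ ∧ ξ < omega1 := by
    intro p hp ξ hξ
    obtain ⟨B, hB, rfl⟩ := Finset.mem_image.1 hξ
    have hB𝒜 : B ∈ 𝒜 := (hrep p hp).2.1 hB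
    have h2 := hι B hB𝒜
    rw [h2.2]
    exact ⟨hB, hB𝒜, rfl, h2.1⟩
  have hu_elem : ∀ p ∈ P, ∀ ξ ∈ uF p, A ξ ∈ 𝒜 ∧ ι (A ξ) = ξ ∧ ξ < omega1 := by
    intro p hp ξ hξ
    rcases Finset.mem_union.1 hξ with h | h
    · exact (hrec1 p hp ξ h).2
    · exact (hrec2 p hp ξ h).2
  have hAinj_u : ∀ p ∈ P, ∀ ξ ∈ uF p, ∀ ζ ∈ uF p, ξ ≠ ζ → A ξ ≠ A ζ := by
    intro p hp ξ hξ ζ hζ hne hAe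
    apply hne
    rw [← (hu_elem p hp ξ hξ).2.1, ← (hu_elem p hp ζ hζ).2.1, hAe]
  -- the bound `nF p` works
  have hgood : ∀ p ∈ P, s8good A 𝒜 (uF p) p (nF p) := by
    intro p hp
    apply s8n_spec
    have hKfin : ((⋃ ξ ∈ (uF p : Set Ordinal.{0}), ⋃ ζ ∈ (uF p : Set Ordinal.{0}),
        if ξ = ζ then (∅ : Set ℕ) else A ξ ∩ A ζ) ∪
        (symmDiff p.1 (⋃ B ∈ (s8rep 𝒜 p).1, B) ∪
         symmDiff p.2 (⋃ B ∈ (s8rep 𝒜 p).2, B))).Finite := by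
      refine Set.Finite.union ?_ (Set.Finite.union (hrep p hp).2.2.1 (hrep p hp).2.2.2)
      refine Set.Finite.biUnion (uF p).finite_toSet fun ξ hξ => ?_
      refine Set.Finite.biUnion (uF p).finite_toSet fun ζ hζ => ?_
      split_ifs with he
      · exact finite_empty
      · exact hAD.2.2 _ (hu_elem p hp ξ hξ).1 _ (hu_elem p hp ζ hζ).1
          (hAinj_u p hp ξ hξ ζ hζ he)
    obtain ⟨n, hn⟩ := hKfin.bddAbove
    refine ⟨n + 1, ?_, ?_, ?_⟩
    · intro ξ hξ ζ hζ hne x hx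
      have hxK : x ∈ (⋃ ξ ∈ (uF p : Set Ordinal.{0}), ⋃ ζ ∈ (uF p : Set Ordinal.{0}),
          if ξ = ζ then (∅ : Set ℕ) else A ξ ∩ A ζ) := by
        simp only [Set.mem_iUnion]
        exact ⟨ξ, hξ, ζ, hζ, by rw [if_neg hne]; exact hx⟩
      exact Nat.lt_succ_of_le (hn (Or.inl hxK))
    · intro x hx
      exact Nat.lt_succ_of_le (hn (Or.inr (Or.inl hx)))
    · intro x hx
      exact Nat.lt_succ_of_le (hn (Or.inr (Or.inr hx)))
  -- above the bound, members of the families lie inside the condition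
  have htail1 : ∀ p ∈ P, ∀ B ∈ (s8rep 𝒜 p).1, ∀ x ∈ B, nF p ≤ x → x ∈ p.1 := by
    intro p hp B hB x hx hnx
    by_contra hx1
    have hxU : x ∈ ⋃ C ∈ (s8rep 𝒜 p).1, C := by
      exact Set.mem_biUnion hB hx
    have : x ∈ symmDiff p.1 (⋃ C ∈ (s8rep 𝒜 p).1, C) := by
      rw [Set.mem_symmDiff]; exact Or.inr ⟨hxU, hx1⟩
    exact absurd hnx (not_le.2 ((hgood p hp).2.1 this))
  have htail2 : ∀ p ∈ P, ∀ B ∈ (s8rep 𝒜 p).2, ∀ x ∈ B, nF p ≤ x → x ∈ p.2 := by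
    intro p hp B hB x hx hnx
    by_contra hx1
    have hxU : x ∈ ⋃ C ∈ (s8rep 𝒜 p).2, C := by
      exact Set.mem_biUnion hB hx
    have : x ∈ symmDiff p.2 (⋃ C ∈ (s8rep 𝒜 p).2, C) := by
      rw [Set.mem_symmDiff]; exact Or.inr ⟨hxU, hx1⟩
    exact absurd hnx (not_le.2 ((hgood p hp).2.2 this))
  -- the Luzin finiteness of the set of indices with small intersection
  have hDfin : ∀ η < omega1, ∀ n : ℕ,
      {ξ : Ordinal.{0} | ξ < η ∧ A ξ ∩ A η ⊆ Set.Iio n}.Finite := by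
    intro η hη n
    have hsub : {ξ : Ordinal.{0} | ξ < η ∧ A ξ ∩ A η ⊆ Set.Iio n} ⊆
        ⋃ m ∈ Finset.range (n + 1), {ξ : Ordinal.{0} | ξ < η ∧ sSup (A ξ ∩ A η) = m} := by
      intro ξ ⟨h1, h2⟩
      have hm : sSup (A ξ ∩ A η) ≤ n := by
        rcases Set.eq_empty_or_nonempty (A ξ ∩ A η) with he | hne
        · rw [he, csSup_empty]; exact Nat.zero_le n
        · exact csSup_le hne fun x hx => Nat.le_of_lt_succ (Nat.lt_succ_of_lt (h2 hx))
      exact Set.mem_biUnion (Finset.mem_range.2 (Nat.lt_succ_of_le hm)) ⟨h1, rfl⟩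
    exact (Set.Finite.biUnion (Finset.range (n + 1)).finite_toSet
      fun m _ => hluzin η hη m).subset hsub
  -- essential distinctness transfers to the index sets
  have himg : ∀ v w : Finset (Set ℕ), ↑v ⊆ 𝒜 → ↑w ⊆ 𝒜 →
      v.image ι = w.image ι → v = w := by
    have key : ∀ v w : Finset (Set ℕ), ↑v ⊆ 𝒜 → ↑w ⊆ 𝒜 →
        v.image ι = w.image ι → ∀ B ∈ v, B ∈ w := by
      intro v w hv hw h B hB
      have : ι B ∈ w.image ι := by rw [← h]; exact Finset.mem_image_of_mem ι hB
      obtain ⟨B', hB', hBB⟩ := Finset.mem_image.1 this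
      have e1 : A (ι B') = B' := (hι B' (hw hB')).2
      have e2 : A (ι B) = B := (hι B (hv hB)).2
      have hBB' : B' = B := by rw [← e1, hBB, e2]
      exact hBB' ▸ hB'
    intro v w hv hw h
    exact Finset.Subset.antisymm (fun B hB => key v w hv hw h B hB)
      (fun B hB => key w v hw hv h.symm B hB)
  have hst_ne : ∀ p ∈ P, ∀ q ∈ P, p ≠ q → sF p ≠ sF q ∧ tF p ≠ tF q := by
    intro p hp q hq hne
    have hd := hed p hp q hq hne _ _ _ _ (hrep p hp) (hrep q hq)
    constructor
    · intro h; exact hd.1 (himg _ _ (hrep p hp).1 (hrep q hq).1 h)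
    · intro h; exact hd.2 (himg _ _ (hrep p hp).2.1 (hrep q hq).2.1 h)
  -- compatibility gives exact disjointness between opposite sides
  have hcompat : ∀ p q : Set ℕ × Set ℕ, Compat 𝒜 p q →
      p.1 ∩ q.2 = ∅ ∧ q.1 ∩ p.2 = ∅ := by
    rintro p q ⟨r, ⟨hr12, -⟩, ⟨hrp1, hrp2⟩, ⟨hrq1, hrq2⟩⟩
    constructor
    · exact Set.eq_empty_of_subset_empty (hr12 ▸ Set.inter_subset_inter hrp1 hrq2)
    · exact Set.eq_empty_of_subset_empty (hr12 ▸ Set.inter_subset_inter hrq1 hrp2)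
  -- the crucial cross intersection bound
  have hcross : ∀ p ∈ P, ∀ q ∈ P, nF p = nF q → p.1 ∩ q.2 = ∅ →
      ∀ ξ ∈ sF p, ∀ ζ ∈ tF q, A ξ ∩ A ζ ⊆ Set.Iio (nF p) := by
    intro p hp q hq hnn hdisj ξ hξ ζ hζ x hx
    by_contra hlt
    have hnx : nF p ≤ x := not_lt.1 hlt
    have hx1 : x ∈ p.1 := htail1 p hp _ (hrec1 p hp ξ hξ).1 x hx.1 hnx
    have hx2 : x ∈ q.2 := htail2 q hq _ (hrec2 q hq ζ hζ).1 x hx.2 (hnn ▸ hnx)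
    have : x ∈ p.1 ∩ q.2 := ⟨hx1, hx2⟩
    rw [hdisj] at this
    exact this
  -- basic facts on the sup of the index sets
  have hle_sup : ∀ p : Set ℕ × Set ℕ, ∀ ξ ∈ uF p, ξ ≤ ηF p :=
    fun p ξ h => Finset.le_sup (f := id) h
  have hsup_mem : ∀ p : Set ℕ × Set ℕ, (uF p).Nonempty → ηF p ∈ uF p := by
    intro p h
    obtain ⟨b, hb, he⟩ := Finset.exists_mem_eq_sup (uF p) h id
    rw [hetaF]
    simpa [he] using hb
  have homega1_pos : (0 : Ordinal.{0}) < omega1 := by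
    rw [omega1, ← Cardinal.ord_zero]
    exact Cardinal.ord_lt_ord.2 (Cardinal.aleph_pos 1)
  have heta_lt : ∀ p ∈ P, ηF p < omega1 := by
    intro p hp
    rcases (uF p).eq_empty_or_nonempty with h | h
    · have : ηF p = 0 := by rw [hetaF]; simp [h]
      rw [this]; exact homega1_pos
    · exact (hu_elem p hp _ (hsup_mem p h)).2.2
  -- every index of a condition is the top index or has small intersection with it
  have hU : ∀ q ∈ P, ∀ ζ ∈ uF q,
      ζ = ηF q ∨ (ζ < ηF q ∧ A ζ ∩ A (ηF q) ⊆ Set.Iio (nF q)) := by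
    intro q hq ζ hζ
    by_cases he : ζ = ηF q
    · exact Or.inl he
    · have hlt : ζ < ηF q := lt_of_le_of_ne (hle_sup q ζ hζ) he
      have hηm : ηF q ∈ uF q := hsup_mem q ⟨ζ, hζ⟩
      exact Or.inr ⟨hlt, (hgood q hq).1 ζ hζ (ηF q) hηm he⟩
  -- finiteness of ties
  have hties : ∀ p ∈ P, {q | q ∈ P ∧ nF q = nF p ∧ ηF q = ηF p}.Finite := by
    intro p hp
    have hWfin : (insert (ηF p)
        {ξ : Ordinal.{0} | ξ < ηF p ∧ A ξ ∩ A (ηF p) ⊆ Set.Iio (nF p)}).Finite :=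
      (hDfin (ηF p) (heta_lt p hp) (nF p)).insert _
    refine (s8_finite_subsets_finset tF (fun a ha b hb hne => (hst_ne a ha b hb hne).2)
      hWfin).subset ?_
    rintro q ⟨hq, hn, he⟩
    refine ⟨hq, fun ζ hζ => ?_⟩
    have hζu : ζ ∈ uF q := Finset.mem_union_right _ hζ
    rcases hU q hq ζ hζu with h | ⟨h1, h2⟩
    · rw [h, he]; exact Set.mem_insert _ _
    · exact Set.mem_insert_of_mem _ ⟨he ▸ h1, by rw [← he]; exact hn ▸ h2⟩
  -- the main finiteness result
  have hN : ∀ p ∈ P,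
      {q | q ∈ P ∧ q ≠ p ∧ (nF q = nF p ∧ Compat 𝒜 p q) ∧ ηF q ≤ ηF p}.Finite := by
    intro p hp
    have hT2 : {q | q ∈ P ∧ q ≠ p ∧ (nF q = nF p ∧ Compat 𝒜 p q) ∧ ηF q < ηF p}.Finite := by
      rcases (uF p).eq_empty_or_nonempty with hemp | hne
      · have hz : ηF p = 0 := by rw [hetaF]; simp [hemp]
        refine Set.finite_empty.subset ?_
        rintro q ⟨-, -, -, hlt⟩
        rw [hz] at hlt
        exact absurd hlt (not_lt_of_ge zero_le)
      · have hηm : ηF p ∈ uF p := hsup_mem p hne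
        rcases Finset.mem_union.1 hηm with hside | hside
        · -- top index on the `s` side: `t`-families of compatible smaller conditions
          refine (s8_finite_subsets_finset tF
            (fun a ha b hb hne' => (hst_ne a ha b hb hne').2)
            (hDfin (ηF p) (heta_lt p hp) (nF p))).subset ?_
          rintro q ⟨hq, hqne, ⟨hnn, hcom⟩, hlt⟩
          refine ⟨hq, fun ζ hζ => ?_⟩
          have hζu : ζ ∈ uF q := Finset.mem_union_right _ hζ
          have hζlt : ζ < ηF p := lt_of_le_of_lt (hle_sup q ζ hζu) hlt
          have := hcross p hp q hq hnn.symm (hcompat p q hcom).1 (ηF p) hside ζ hζ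
          exact ⟨hζlt, by rw [Set.inter_comm]; exact this⟩
        · -- top index on the `t` side: `s`-families of compatible smaller conditions
          refine (s8_finite_subsets_finset sF
            (fun a ha b hb hne' => (hst_ne a ha b hb hne').1)
            (hDfin (ηF p) (heta_lt p hp) (nF p))).subset ?_
          rintro q ⟨hq, hqne, ⟨hnn, hcom⟩, hlt⟩
          refine ⟨hq, fun ζ hζ => ?_⟩
          have hζu : ζ ∈ uF q := Finset.mem_union_left _ hζ
          have hζlt : ζ < ηF p := lt_of_le_of_lt (hle_sup q ζ hζu) hlt
          have := hcross q hq p hp hnn (hcompat p q hcom).2 ζ hζ (ηF p) hside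
          exact ⟨hζlt, hnn ▸ this⟩
    refine ((hties p hp).union hT2).subset ?_
    rintro q ⟨hq, hqne, ⟨hnn, hcom⟩, hle⟩
    rcases lt_or_eq_of_le hle with h | h
    · exact Or.inr ⟨hq, hqne, ⟨hnn, hcom⟩, h⟩
    · exact Or.inl ⟨hq, hnn, h⟩
  -- apply the coloring lemma on the subtype
  obtain ⟨c, hc⟩ := s8_exists_nat_coloring (X := {p // p ∈ P})
    (fun x y => nF y.1 = nF x.1 ∧ Compat 𝒜 x.1 y.1)
    (by
      rintro x y ⟨h1, r, hr, hx, hy⟩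
      exact ⟨h1.symm, r, hr, hy, hx⟩)
    (fun x => ηF x.1)
    (by
      intro x
      apply Set.Finite.of_finite_image (f := Subtype.val) ((hN x.1 x.2).subset ?_)
        (Subtype.val_injective.injOn)
      rintro _ ⟨y, ⟨hne, ⟨hn, hcom⟩, hle⟩, rfl⟩
      exact ⟨y.2, fun h => hne (Subtype.ext h), ⟨hn, hcom⟩, hle⟩)
  refine ⟨fun k => {p | p ∈ P ∧ nF p = (Nat.unpair k).1 ∧
      ∀ h : p ∈ P, c ⟨p, h⟩ = (Nat.unpair k).2}, ?_, ?_⟩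
  · ext p
    simp only [Set.mem_iUnion, Set.mem_setOf_eq]
    constructor
    · intro hp
      refine ⟨Nat.pair (nF p) (c ⟨p, hp⟩), hp, by simp, fun h => by simp⟩
    · rintro ⟨k, h, -⟩; exact h
  · rintro k p ⟨hp, hp1, hp2⟩ q ⟨hq, hq1, hq2⟩ hne hcom
    exact hc ⟨p, hp⟩ ⟨q, hq⟩ (fun h => hne (congrArg Subtype.val h))
      ⟨hq1.trans hp1.symm, hcom⟩ ((hp2 hp).trans (hq2 hq).symm)
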